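/- With N_i as the number of pairs (j1, j2) with j1 + j2 = i, 0 ≤ j1 ≤ 2^(m+1) − 1, 0 ≤ j2 ≤ 2^m − 1, we have N_i odd if and only if i = 2l with 0 ≤ l ≤ 2^(m−1) − 1, or i = 2^(m+1) + 2l with 0 ≤ l ≤ 2^(m−1) − 1. -/
import Mathlib

lemma card_conv (a b i : ℕ) :
    ((Finset.range a ×ˢ Finset.range b).filter (fun p => p.1 + p.2 = i)).card
      = min b (i + 1) - (i + 1 - a) := by
  rw [← Nat.card_Ico (i + 1 - a) (min b (i + 1)), eq_comm]
  apply Finset.card_bij (fun j _ => (i - j, j))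
  · intro j hj
    simp only [Finset.mem_Ico, lt_min_iff] at hj
    simp only [Finset.mem_filter, Finset.mem_product, Finset.mem_range]
    omega
  · intro j1 h1 j2 h2 h
    exact (Prod.mk.injEq _ _ _ _ ▸ h).2
  · intro p hp
    simp only [Finset.mem_filter, Finset.mem_product, Finset.mem_range] at hp
    refine ⟨p.2, ?_, ?_⟩
    · simp only [Finset.mem_Ico, lt_min_iff]; omega
    · ext <;> simp <;> omega

/-- With `N_i` the number of pairs `(j₁, j₂)` with `j₁ + j₂ = i`, `0 ≤ j₁ ≤ 2^(m+1) − 1`,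
`0 ≤ j₂ ≤ 2^m − 1`, the number `N_i` is odd if and only if `i = 2l` with
`0 ≤ l ≤ 2^(m−1) − 1`, or `i = 2^(m+1) + 2l` with `0 ≤ l ≤ 2^(m−1) − 1`. -/
theorem stmt_2 (m : ℕ) (hm : 1 ≤ m)
    (N : ℕ → ℕ)
    (hN : ∀ i, N i = ((Finset.range (2 ^ (m + 1)) ×ˢ Finset.range (2 ^ m)).filter
      (fun p => p.1 + p.2 = i)).card)
    (i : ℕ) (hi : i ≤ 3 * 2 ^ m - 2) :
    Odd (N i) ↔
      (∃ l, l ≤ 2 ^ (m - 1) - 1 ∧ i = 2 * l) ∨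
      (∃ l, l ≤ 2 ^ (m - 1) - 1 ∧ i = 2 ^ (m + 1) + 2 * l) := by
  have hK : (1 : ℕ) ≤ 2 ^ (m - 1) := Nat.one_le_two_pow
  set K := 2 ^ (m - 1) with hKdef
  have h2m : 2 ^ m = 2 * K := by
    rw [hKdef, ← pow_succ']
    congr 1
    omega
  have h2m1 : 2 ^ (m + 1) = 4 * K := by rw [pow_succ, h2m]; ring
  rw [hN, card_conv, Nat.odd_iff, h2m, h2m1]
  rw [h2m] at hi
  constructor
  · intro h
    rcases Nat.lt_or_ge i (4 * K) with h4 | h4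
    · left; exact ⟨i / 2, by omega, by omega⟩
    · right; exact ⟨(i - 4 * K) / 2, by omega, by omega⟩
  · rintro (⟨l, hl, rfl⟩ | ⟨l, hl, rfl⟩) <;> omega
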